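/- A distributive lattice with no infinite strictly descending chains and no bounded infinite strictly ascending chains is locally finite, i.e., every interval [x, y] is finite. -/
import Mathlib

section Aux

variable {α : Type*} [DistribLattice α]

/-- If `A` (the covers of `a` below `y`) is infinite, we get a bounded strictly
increasing sequence. -/
private theorem covers_finite
    (hasc : ¬ ∃ (f : ℕ → α) (b : α), StrictMono f ∧ ∀ n, f n < b)
    {a y : α} (ha : a ≤ y)
    (A : Set α)
    (hAsub : ∀ p ∈ A, (a < p ∧ ∀ t, a < t → t < p → False) ∧ p ≤ y) :
    A.Finite := by
  classical
  by_contra hA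
  have hA : A.Infinite := hA
  -- pick function
  have pick : ∀ F : Finset α, ∃ p, p ∈ A ∧ p ∉ F := by
    intro F
    obtain ⟨p, hp⟩ := (hA.diff F.finite_toSet).nonempty
    exact ⟨p, hp.1, by simpa using hp.2⟩
  -- the recursive sequence of (current join, used covers)
  let h : ℕ → α × Finset α := fun n =>
    Nat.rec (a, (∅ : Finset α))
      (fun _ ih => ((ih.1 ⊔ (pick ih.2).choose), insert (pick ih.2).choose ih.2)) n
  have hsucc : ∀ n, h (n+1) =
      ((h n).1 ⊔ (pick (h n).2).choose, insert (pick (h n).2).choose (h n).2) := by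
    intro n; rfl
  -- invariants
  have inv : ∀ n, a ≤ (h n).1 ∧ (h n).1 ≤ y ∧
      (∀ q, (a < q ∧ ∀ t, a < t → t < q → False) → q ≤ (h n).1 → q ∈ (h n).2) := by
    intro n
    induction n with
    | zero =>
      refine ⟨le_rfl, ha, ?_⟩
      intro q hq hle
      exact absurd (lt_of_lt_of_le hq.1 hle) (lt_irrefl a)
    | succ n ih =>
      obtain ⟨iha, ihy, ihmem⟩ := ih
      set p := (pick (h n).2).choose with hpdef
      obtain ⟨hpA, _⟩ := (pick (h n).2).choose_spec
      obtain ⟨⟨hap, hpcov⟩, hpy⟩ := hAsub p hpA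
      rw [hsucc n]
      refine ⟨le_trans iha le_sup_left, sup_le ihy hpy, ?_⟩
      intro q hq hle
      obtain ⟨haq, hqcov⟩ := hq
      -- q = (q ⊓ (h n).1) ⊔ (q ⊓ p)
      have hdist : q = (q ⊓ (h n).1) ⊔ (q ⊓ p) := by
        rw [← inf_sup_left]
        exact (inf_eq_left.mpr hle).symm
      -- q ⊓ (h n).1 is a or q
      have h1 : q ⊓ (h n).1 = a ∨ q ⊓ (h n).1 = q := by
        rcases eq_or_ne (q ⊓ (h n).1) a with h' | h'
        · exact Or.inl h'
        · rcases eq_or_ne (q ⊓ (h n).1) q with h'' | h''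
          · exact Or.inr h''
          · have hlt1 : a < q ⊓ (h n).1 :=
              lt_of_le_of_ne (le_inf haq.le iha) (Ne.symm h')
            have hlt2 : q ⊓ (h n).1 < q := lt_of_le_of_ne inf_le_left h''
            exact absurd (hqcov _ hlt1 hlt2) (fun f => f)
      rcases h1 with h1 | h1
      · -- then q = a ⊔ (q ⊓ p), so q ⊓ p ≠ a, so q ⊓ p = p or q via p's cover property
        have hq2 : q = a ⊔ (q ⊓ p) := by rw [← h1]; exact hdist
        have h2 : q ⊓ p = a ∨ q ⊓ p = p := by
          rcases eq_or_ne (q ⊓ p) a with h' | h'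
          · exact Or.inl h'
          · rcases eq_or_ne (q ⊓ p) p with h'' | h''
            · exact Or.inr h''
            · have hlt1 : a < q ⊓ p := lt_of_le_of_ne (le_inf haq.le hap.le) (Ne.symm h')
              have hlt2 : q ⊓ p < p := lt_of_le_of_ne inf_le_right h''
              exact absurd (hpcov _ hlt1 hlt2) (fun f => f)
        rcases h2 with h2 | h2
        · rw [h2, sup_idem] at hq2
          exact absurd hq2.symm (ne_of_lt haq)
        · -- p ≤ q, both covers, so p = q
          have hpq : p ≤ q := h2 ▸ inf_le_left
          have : p = q := by
            by_contra hne
            exact hqcov p hap (lt_of_le_of_ne hpq hne)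
          rw [← this]
          exact Finset.mem_insert_self _ _
      · -- q ≤ (h n).1
        have : q ≤ (h n).1 := h1 ▸ inf_le_right
        exact Finset.mem_insert_of_mem (ihmem q ⟨haq, hqcov⟩ this)
  -- the sequence g is strictly monotone and bounded
  have hstrict : StrictMono (fun n => (h n).1) := by
    apply strictMono_nat_of_lt_succ
    intro n
    set p := (pick (h n).2).choose with hpdef
    obtain ⟨hpA, hpnot⟩ := (pick (h n).2).choose_spec
    obtain ⟨⟨hap, hpcov⟩, _⟩ := hAsub p hpA
    rw [hsucc n]
    apply left_lt_sup.mpr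
    intro hple
    exact hpnot ((inv n).2.2 p ⟨hap, hpcov⟩ hple)
  refine hasc ⟨fun n => (h n).1, y, hstrict, ?_⟩
  intro n
  exact lt_of_lt_of_le (hstrict (Nat.lt_succ_self n)) (inv (n+1)).2.1

end Aux

/-- A distributive lattice with no infinite strictly descending chains and no
bounded infinite strictly ascending chains is locally finite. -/
theorem chain_conditions_locally_finite {α : Type*} [DistribLattice α]
    (hdesc : ¬ ∃ f : ℕ → α, StrictAnti f)
    (hasc : ¬ ∃ (f : ℕ → α) (b : α), StrictMono f ∧ ∀ n, f n < b) :
    ∀ x y : α, (Set.Icc x y).Finite := by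
  intro x y
  -- well-foundedness of <
  have wfLT : WellFounded ((· < ·) : α → α → Prop) := by
    rw [RelEmbedding.wellFounded_iff_isEmpty]
    constructor
    intro f
    exact hdesc ⟨f, fun m n hmn => f.map_rel_iff.mpr hmn⟩
  -- well-foundedness of > on Icc x y
  have wfGT : (Set.Icc x y).WellFoundedOn ((· > ·) : α → α → Prop) := by
    rw [Set.wellFoundedOn_iff_no_descending_seq]
    intro f hf
    have hmono : StrictMono f := fun m n hmn => f.map_rel_iff.mpr hmn
    refine hasc ⟨f, y, hmono, fun n => ?_⟩
    exact lt_of_lt_of_le (hmono (Nat.lt_succ_self n)) (hf (n+1)).2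
  by_cases hxy : x ≤ y
  · -- main induction
    have key : ∀ a ∈ Set.Icc x y, (Set.Icc a y).Finite := by
      intro a ha
      refine Set.WellFoundedOn.induction wfGT ha (P := fun b => (Set.Icc b y).Finite) ?_
      intro b hb IH
      -- covers of b inside [b, y]
      set A : Set α := {p | (b < p ∧ ∀ t, b < t → t < p → False) ∧ p ≤ y} with hAdef
      have hAfin : A.Finite := covers_finite hasc hb.2 A (fun p hp => hp)
      have hsub : Set.Icc b y ⊆ insert b (⋃ p ∈ A, Set.Icc p y) := by
        intro c hc
        rcases eq_or_ne c b with rfl | hne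
        · exact Set.mem_insert _ _
        · have hbc : b < c := lt_of_le_of_ne hc.1 (Ne.symm hne)
          -- minimal element of {t | b < t ∧ t ≤ c}
          obtain ⟨m, ⟨hbm, hmc⟩, hmin⟩ :=
            wfLT.has_min {t | b < t ∧ t ≤ c} ⟨c, hbc, le_rfl⟩
          have hmA : m ∈ A := by
            refine ⟨⟨hbm, fun t h1 h2 => ?_⟩, le_trans hmc hc.2⟩
            exact hmin t ⟨h1, le_trans h2.le hmc⟩ h2
          refine Set.mem_insert_of_mem _ ?_
          exact Set.mem_biUnion hmA ⟨hmc, hc.2⟩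
      refine Set.Finite.subset ?_ hsub
      refine Set.Finite.insert b (Set.Finite.biUnion hAfin ?_)
      intro p hp
      exact IH p ⟨le_trans hb.1 hp.1.1.le, hp.2⟩ hp.1.1
    exact key x ⟨le_rfl, hxy⟩
  · rw [Set.Icc_eq_empty hxy]
    exact Set.finite_empty
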